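/- If H is a malnormal subgroup of a group G₁ (i.e., H ∩ gHg⁻¹ = {1} for all g ∈ G₁ \ H), then H is malnormal in the free product G₁ * G₂ for any group G₂. -/

import Mathlib

open Monoid

universe u₁ u₂

namespace StmtAux

open Monoid CoprodI CoprodI.Word

variable {ι : Type*} {G : ι → Type*} [∀ i, Group (G i)]

theorem word_eq_empty_of_conj [DecidableEq ι] [∀ i, DecidableEq (G i)]
    {w : Word G} {j k : ι} {a : G j} {b : G k} (ha : a ≠ 1)
    (hlast : ∀ l ∈ w.toList.getLast?, Sigma.fst l ≠ j)
    (h : w.prod * CoprodI.of a * w.prod⁻¹ = CoprodI.of b) : w = Word.empty := by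
  have hofa : (CoprodI.of a : CoprodI G) ≠ 1 := fun e =>
    ha (CoprodI.of_injective j (by rw [e, map_one]))
  have hb1 : b ≠ 1 := by
    rintro rfl
    rw [map_one] at h
    apply hofa
    have := congrArg (fun z => w.prod⁻¹ * z * w.prod) h
    simpa [mul_assoc] using this
  classical
  set L := w.toList with hLdef
  set R : List (Σ i, G i) := (L.map fun l => ⟨l.1, l.2⁻¹⟩).reverse with hR
  have hRhead : R.head? = L.getLast?.map fun l => (⟨l.1, l.2⁻¹⟩ : Σ i, G i) := by
    rw [hR, List.head?_reverse, List.getLast?_map]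
  have hchainW : (L ++ ⟨j, a⟩ :: R).IsChain fun l l' => Sigma.fst l ≠ Sigma.fst l' := by
    rw [List.isChain_append]
    refine ⟨w.chain_ne, ?_, ?_⟩
    · refine List.isChain_cons.2 ⟨?_, ?_⟩
      · intro y hy
        rw [hRhead, Option.mem_def, Option.map_eq_some_iff] at hy
        obtain ⟨l, hl, rfl⟩ := hy
        exact (hlast l hl).symm
      · rw [hR, List.isChain_reverse, List.isChain_map]
        exact w.chain_ne.imp fun a b hab => Ne.symm hab
    · intro x hx y hy
      simp only [List.head?_cons, Option.mem_def, Option.some.injEq] at hy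
      subst hy
      exact hlast x hx
  have hneW : ∀ l ∈ L ++ ⟨j, a⟩ :: R, Sigma.snd l ≠ 1 := by
    intro l hl
    rcases List.mem_append.1 hl with hl | hl
    · exact w.ne_one l hl
    · rcases List.mem_cons.1 hl with rfl | hl
      · exact ha
      · rw [hR, List.mem_reverse, List.mem_map] at hl
        obtain ⟨l', hl', rfl⟩ := hl
        exact inv_ne_one.2 (w.ne_one l' hl')
  set W : Word G := ⟨L ++ ⟨j, a⟩ :: R, hneW, hchainW⟩ with hW
  have hprodR : ((R.map fun l => CoprodI.of l.2).prod : CoprodI G) = w.prod⁻¹ := by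
    rw [hR, List.map_reverse, List.map_map]
    have : ((fun l => CoprodI.of l.2) ∘ fun l => (⟨l.1, l.2⁻¹⟩ : Σ i, G i)) =
        (Inv.inv ∘ fun l : Σ i, G i => CoprodI.of l.2) := by
      funext l
      simp
    rw [this, ← List.map_map]
    exact (List.prod_inv_reverse _).symm
  have hprodW : W.prod = CoprodI.of b := by
    rw [← h]
    show ((L ++ ⟨j, a⟩ :: R).map fun l => CoprodI.of l.2).prod = _
    rw [List.map_append, List.prod_append, List.map_cons, List.prod_cons, hprodR]
    show (L.map fun l => CoprodI.of l.2).prod * _ = _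
    rw [← mul_assoc]
    rfl
  set B : Word G := ⟨[⟨k, b⟩], by simpa using hb1, List.isChain_singleton _⟩ with hB
  have hprodB : B.prod = CoprodI.of b := by
    simp [hB, Word.prod]
  have hinj : Function.Injective (Word.prod : Word G → CoprodI G) :=
    fun w₁ w₂ hw => by
      have h₁ := Word.equiv.right_inv w₁
      have h₂ := Word.equiv.right_inv w₂
      rw [← h₁, ← h₂]
      show Word.equiv.toFun (Word.prod w₁) = Word.equiv.toFun (Word.prod w₂)
      rw [hw]
  have hWB : W = B := hinj (hprodW.trans hprodB.symm)
  have hlen : (L ++ ⟨j, a⟩ :: R).length = 1 :=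
    congrArg (fun u : Word G => u.toList.length) hWB
  rw [List.length_append, List.length_cons, hR, List.length_reverse, List.length_map] at hlen
  have hL0 : L.length = 0 := by omega
  have : w.toList = [] := List.length_eq_zero_iff.1 hL0
  exact Word.ext this

theorem exists_of_conj [DecidableEq ι] [∀ i, DecidableEq (G i)] {x : CoprodI G} {j k : ι} {a : G j} {b : G k}
    (ha : a ≠ 1) (h : x * CoprodI.of a * x⁻¹ = CoprodI.of b) : ∃ c : G j, x = CoprodI.of c := by
  set w : Word G := Word.equiv x with hwdef
  have hx : Word.prod w = x := Word.equiv.left_inv x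
  rcases List.eq_nil_or_concat' w.toList with hnil | ⟨L, l, hL⟩
  · refine ⟨1, ?_⟩
    rw [← hx, map_one]
    show (w.toList.map fun l => CoprodI.of l.2).prod = 1
    rw [hnil]
    rfl
  · obtain ⟨p, m⟩ := l
    by_cases hp : p = j
    · subst hp
      have hmem : ∀ l' ∈ L, l' ∈ w.toList := fun l' h' => by
        rw [hL]; exact List.mem_append_left _ h'
      have hchainL : L.Chain' fun l l' => Sigma.fst l ≠ Sigma.fst l' :=
        w.chain_ne.prefix ⟨[⟨p, m⟩], hL.symm⟩
      set u : Word G := ⟨L, fun l' hl' => w.ne_one l' (hmem l' hl'), hchainL⟩ with hu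
      have hxu : x = u.prod * CoprodI.of m := by
        rw [← hx]
        show (w.toList.map fun l => CoprodI.of l.2).prod = _
        rw [hL, List.map_append, List.prod_append]
        rfl
      have hm1 : m ≠ 1 := w.ne_one ⟨p, m⟩ (by rw [hL]; exact List.mem_append_right _ (by simp))
      have hma : m * a * m⁻¹ ≠ 1 := by
        intro e
        apply ha
        have := congrArg (fun z => m⁻¹ * z * m) e
        simpa [mul_assoc] using this
      have hlastL : ∀ l' ∈ L.getLast?, Sigma.fst l' ≠ p := by
        have hch := w.chain_ne
        rw [hL, List.isChain_append] at hch
        intro l' hl'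
        exact hch.2.2 l' hl' ⟨p, m⟩ rfl
      have key : u.prod * CoprodI.of (m * a * m⁻¹) * u.prod⁻¹ = CoprodI.of b := by
        rw [map_mul, map_mul, ← h, hxu]
        simp [mul_assoc]
      have hue := word_eq_empty_of_conj hma hlastL key
      refine ⟨m, ?_⟩
      rw [hxu, hue]
      show (Word.empty.toList.map fun l => CoprodI.of l.2).prod * _ = _
      simp [Word.empty]
    · have hlast : ∀ l' ∈ w.toList.getLast?, Sigma.fst l' ≠ j := by
        rw [hL, List.getLast?_concat]
        rintro l' hl'
        obtain rfl := Option.mem_some_iff.mp hl'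
        exact hp
      have := word_eq_empty_of_conj ha hlast (by rw [hx]; exact h)
      rw [this] at hL
      simp [Word.empty] at hL

abbrev Fam (G₁ : Type u₁) (G₂ : Type u₂) : Bool → Type (max u₁ u₂) :=
  fun b => cond b (ULift.{u₂} G₁) (ULift.{u₁} G₂)

instance (G₁ : Type u₁) (G₂ : Type u₂) [Group G₁] [Group G₂] : ∀ b, Group (Fam G₁ G₂ b)
  | true => inferInstanceAs (Group (ULift G₁))
  | false => inferInstanceAs (Group (ULift G₂))

def psi (G₁ : Type u₁) (G₂ : Type u₂) [Group G₁] [Group G₂] :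
    Coprod G₁ G₂ →* CoprodI (Fam G₁ G₂) :=
  Coprod.lift
    ((CoprodI.of (i := true)).comp (MulEquiv.ulift.symm.toMonoidHom))
    ((CoprodI.of (i := false)).comp (MulEquiv.ulift.symm.toMonoidHom))

def chi (G₁ : Type u₁) (G₂ : Type u₂) [Group G₁] [Group G₂] :
    CoprodI (Fam G₁ G₂) →* Coprod G₁ G₂ :=
  CoprodI.lift (fun b => match b with
    | true => (Coprod.inl (M := G₁) (N := G₂)).comp MulEquiv.ulift.toMonoidHom
    | false => (Coprod.inr (M := G₁) (N := G₂)).comp MulEquiv.ulift.toMonoidHom)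

theorem psi_inl {G₁ : Type u₁} {G₂ : Type u₂} [Group G₁] [Group G₂] (x : G₁) :
    psi G₁ G₂ (Coprod.inl x) = CoprodI.of (i := true) (ULift.up x) :=
  Coprod.lift_apply_inl _ _ _

theorem chi_psi {G₁ : Type u₁} {G₂ : Type u₂} [Group G₁] [Group G₂] (x : Coprod G₁ G₂) :
    chi G₁ G₂ (psi G₁ G₂ x) = x := by
  have : (chi G₁ G₂).comp (psi G₁ G₂) = MonoidHom.id _ := by
    apply Coprod.hom_ext
    · ext y
      simp [psi, chi, Coprod.lift_apply_inl, CoprodI.lift_of]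
    · ext y
      simp [psi, chi, Coprod.lift_apply_inr, CoprodI.lift_of]
  exact DFunLike.congr_fun this x

theorem psi_injective {G₁ : Type u₁} {G₂ : Type u₂} [Group G₁] [Group G₂] :
    Function.Injective (psi G₁ G₂) :=
  Function.LeftInverse.injective chi_psi

end StmtAux

open StmtAux in
/-- If H is malnormal in G₁, then H is malnormal in the free product G₁ ∗ G₂. -/
theorem stmt_2 {G₁ G₂ : Type*} [Group G₁] [Group G₂] (H : Subgroup G₁)
    (hmal : ∀ g : G₁, g ∉ H → ∀ h ∈ H, g * h * g⁻¹ ∈ H → h = 1) :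
    ∀ g : Coprod G₁ G₂, g ∉ H.map (Coprod.inl : G₁ →* Coprod G₁ G₂) →
      ∀ h ∈ H.map (Coprod.inl : G₁ →* Coprod G₁ G₂),
        g * h * g⁻¹ ∈ H.map (Coprod.inl : G₁ →* Coprod G₁ G₂) → h = 1 := by
  intro g hg h hh hconj
  obtain ⟨h₀, hh₀, rfl⟩ := hh
  obtain ⟨b₀, hb₀, hb⟩ := hconj
  by_cases h1 : h₀ = 1
  · rw [h1, map_one]
  · exfalso
    letI : ∀ b, DecidableEq (Fam G₁ G₂ b) := fun _ => Classical.decEq _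
    have ha : (ULift.up h₀ : Fam G₁ G₂ true) ≠ 1 := fun e => h1 (congrArg ULift.down e)
    have heq : psi G₁ G₂ g * CoprodI.of (i := true) (ULift.up h₀) * (psi G₁ G₂ g)⁻¹ =
        CoprodI.of (i := true) (ULift.up b₀) := by
      rw [← psi_inl h₀, ← psi_inl b₀, ← map_inv, ← map_mul, ← map_mul, ← hb]
    obtain ⟨c, hc⟩ := @exists_of_conj Bool (Fam G₁ G₂) _ instDecidableEqBool _ _ _ _ _ _ ha heq
    have hgc : g = Coprod.inl c.down := by
      apply psi_injective
      rw [hc, psi_inl]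
      rfl
    have hcH : c.down ∉ H := fun hmem => hg ⟨c.down, hmem, hgc.symm⟩
    have hbc : b₀ = c.down * h₀ * c.down⁻¹ := by
      apply Coprod.inl_injective (M := G₁) (N := G₂)
      rw [hb, hgc]
      simp
    exact h1 (hmal c.down hcH h₀ hh₀ (hbc ▸ hb₀))
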